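/- Let Φ ∈ S₂(E, E_*). The subspace F := {(Φe, e) : e ∈ E} of the de Branges–Rovnyak model ℋ is wandering for the pair of commuting unitaries (U₁, U₂): for every (n₁, n₂) ∈ ℤ² \ {(0,0)} and η, ν ∈ E, the vector (Φη, η) is orthogonal in ℋ to U₁^{n₁}U₂^{n₂}(Φν, ν). Moreover, ⟨(Φη, η), (Φν, ν)⟩_ℋ = ⟨η, ν⟩_E. -/

import Mathlib

/- STATEMENT 4: Let Φ ∈ S₂(E, E_*).  The subspace F = {(Φe, e) : e ∈ E} of the de
Branges–Rovnyak model ℋ is wandering for the commuting unitaries (U₁, U₂): for every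
(n₁,n₂) ∈ ℤ² \ {(0,0)} and η, ν ∈ E one has (Φη, η) ⟂_ℋ U₁^{n₁}U₂^{n₂}(Φν, ν), and
moreover ⟨(Φη,η), (Φν,ν)⟩_ℋ = ⟨η, ν⟩_E.

`u n` (resp. `us n`) is the unitary ℤ²-representation n ↦ Z₁^{n₁}Z₂^{n₂} on L²(E)
(resp. L²(E_*)); `ι : E → L²(E)` is the isometric embedding as constants, which is
wandering for (Z₁, Z₂) in L²(E) (hypothesis `hwand`); `Un n` acts componentwise and
commutes with S = [[I,Φ],[Φ*,I]]^{1/2}.  Note (Φe, e) = [[I,Φ],[Φ*,I]](0, e) = S(S(0,e)),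
so the element (Φη, η) of ℋ is `S (S (pr 0 (ι η)))`. -/

open scoped ComplexInnerProductSpace

noncomputable def pr {A B : Type*} [NormedAddCommGroup A] [NormedAddCommGroup B]
    (f : A) (g : B) : WithLp 2 (A × B) := (WithLp.equiv 2 (A × B)).symm (f, g)

theorem stmt_4 {E L2E L2Es : Type*}
    [NormedAddCommGroup E] [InnerProductSpace ℂ E] [CompleteSpace E]
    [NormedAddCommGroup L2E] [InnerProductSpace ℂ L2E] [CompleteSpace L2E]
    [NormedAddCommGroup L2Es] [InnerProductSpace ℂ L2Es] [CompleteSpace L2Es]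
    (MΦ : L2E →L[ℂ] L2Es) (hMΦ : ‖MΦ‖ ≤ 1)
    -- the unitary ℤ²-representations n ↦ Z₁^{n₁} Z₂^{n₂} on L²(E) and L²(E_*):
    (u : ℤ × ℤ → (L2E →L[ℂ] L2E)) (us : ℤ × ℤ → (L2Es →L[ℂ] L2Es))
    (hu0 : u 0 = 1) (huadd : ∀ m n, u (m + n) = u m ∘L u n)
    (huadj : ∀ n, ContinuousLinearMap.adjoint (u n) = u (-n))
    (hus0 : us 0 = 1) (husadd : ∀ m n, us (m + n) = us m ∘L us n)
    (husadj : ∀ n, ContinuousLinearMap.adjoint (us n) = us (-n))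
    (hmult : ∀ n, us n ∘L MΦ = MΦ ∘L u n)
    -- ι : E → L²(E), the isometric embedding as constant functions, wandering for (Z₁,Z₂):
    (ι : E →ₗ[ℂ] L2E)
    (hι : ∀ η ν : E, ⟪ι η, ι ν⟫ = ⟪η, ν⟫)
    (hwand : ∀ n : ℤ × ℤ, n ≠ 0 → ∀ η ν : E, ⟪ι η, u n (ι ν)⟫ = 0)
    -- S = [[I,Φ],[Φ*,I]]^{1/2} and the componentwise action Un of ℤ²:
    (S : WithLp 2 (L2Es × L2E) →L[ℂ] WithLp 2 (L2Es × L2E))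
    (hS : IsSelfAdjoint S) (hSpos : ∀ x, 0 ≤ (⟪S x, x⟫).re)
    (hS2 : ∀ (f : L2Es) (g : L2E),
      S (S (pr f g)) = pr (f + MΦ g) (ContinuousLinearMap.adjoint MΦ f + g))
    (Un : ℤ × ℤ → (WithLp 2 (L2Es × L2E) →L[ℂ] WithLp 2 (L2Es × L2E)))
    (hUn : ∀ n (f : L2Es) (g : L2E), Un n (pr f g) = pr (us n f) (u n g))
    (hUnS : ∀ n, Un n ∘L S = S ∘L Un n)
    -- the operator-range inner product of ℋ:
    (ip : WithLp 2 (L2Es × L2E) → WithLp 2 (L2Es × L2E) → ℂ)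
    (hip : ∀ x y, x ∈ (LinearMap.ker S.toLinearMap)ᗮ → ip (S x) (S y) = ⟪x, y⟫) :
    (∀ n : ℤ × ℤ, n ≠ 0 → ∀ η ν : E,
        ip (S (S (pr (0 : L2Es) (ι η)))) (Un n (S (S (pr (0 : L2Es) (ι ν))))) = 0) ∧
      ∀ η ν : E, ip (S (S (pr (0 : L2Es) (ι η)))) (S (S (pr (0 : L2Es) (ι ν)))) = ⟪η, ν⟫ := by
  have hprfst : ∀ (f : L2Es) (g : L2E), (pr f g).fst = f := fun _ _ => rfl
  have hprsnd : ∀ (f : L2Es) (g : L2E), (pr f g).snd = g := fun _ _ => rfl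
  have hinner : ∀ (f f' : L2Es) (g g' : L2E),
      ⟪pr f g, pr f' g'⟫ = ⟪f, f'⟫ + ⟪g, g'⟫ := by
    intro f f' g g'
    rw [WithLp.prod_inner_apply]
    rfl
  have hrange : ∀ x, S x ∈ (LinearMap.ker S.toLinearMap)ᗮ := by
    intro x
    rw [Submodule.mem_orthogonal]
    intro z hz
    have hz' : S z = 0 := hz
    calc ⟪z, S x⟫ = ⟪ContinuousLinearMap.adjoint S z, x⟫ := by
          rw [ContinuousLinearMap.adjoint_inner_left]
      _ = ⟪S z, x⟫ := by rw [hS.adjoint_eq]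
      _ = 0 := by rw [hz', inner_zero_left]
  have key : ∀ (η : E) (b : WithLp 2 (L2Es × L2E)),
      ip (S (S (pr (0 : L2Es) (ι η)))) (S (S b)) = ⟪pr (0 : L2Es) (ι η), S (S b)⟫ := by
    intro η b
    rw [hip _ _ (hrange _)]
    nth_rewrite 1 [← hS.adjoint_eq]
    rw [ContinuousLinearMap.adjoint_inner_left]
  constructor
  · intro n hn η ν
    have hc : Un n (S (S (pr (0 : L2Es) (ι ν)))) = S (S (Un n (pr (0 : L2Es) (ι ν)))) := by
      have h1 := congrFun (congrArg DFunLike.coe (hUnS n)) (S (pr (0 : L2Es) (ι ν)))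
      have h2 := congrFun (congrArg DFunLike.coe (hUnS n)) (pr (0 : L2Es) (ι ν))
      simp only [ContinuousLinearMap.comp_apply] at h1 h2
      rw [h1, h2]
    rw [hc, key, ← hc, hS2]
    simp only [map_zero, zero_add]
    rw [hUn, hinner, inner_zero_left, hwand n hn, add_zero]
  · intro η ν
    rw [key, hS2, hinner, inner_zero_left, zero_add]
    have : ContinuousLinearMap.adjoint MΦ (0 : L2Es) + ι ν = ι ν := by simp
    rw [this, hι]
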